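/- Let h(z) = −Σ_j λ_j b_j |B_j| log(1/|B_j|) / (r_j b_j − z), where λ_j > 0, |b_j| = 1, |B_j| ∈ (0,1), r_j = 1 + |B_j|, and Σ_j λ_j |B_j| log(1/|B_j|) < ∞. Then the series converges for all |z| < 1, h is holomorphic on the unit disk, and Re h(z) < 0 for all z in the disk; consequently g := exp(h) maps the disk into itself. -/

import Mathlib

open Metric

/-- The series `h(z) = −Σ_j λ_j b_j |B_j| log(1/|B_j|)/(r_j b_j − z)` with `r_j = 1 + |B_j|`
converges on the unit disk, defines a holomorphic function with negative real part there,
and hence `g = exp(h)` maps the disk into itself. -/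
theorem stmt6 (lam B : ℕ → ℝ) (b : ℕ → ℂ)
    (hlam : ∀ j, 0 < lam j) (hb : ∀ j, ‖b j‖ = 1)
    (hB : ∀ j, B j ∈ Set.Ioo (0 : ℝ) 1)
    (hsum : Summable (fun j => lam j * B j * Real.log (1 / B j))) :
    let r : ℕ → ℝ := fun j => 1 + B j
    let term : ℕ → ℂ → ℂ := fun j z =>
      ((lam j * B j * Real.log (1 / B j) : ℝ) : ℂ) * b j / ((r j : ℂ) * b j - z)
    let h : ℂ → ℂ := fun z => -∑' j, term j z
    (∀ z ∈ ball (0 : ℂ) 1, Summable (fun j => term j z)) ∧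
    DifferentiableOn ℂ h (ball (0 : ℂ) 1) ∧
    (∀ z ∈ ball (0 : ℂ) 1, (h z).re < 0 ∧ ‖Complex.exp (h z)‖ < 1) := by
  intro r term h
  set c : ℕ → ℝ := fun j => lam j * B j * Real.log (1 / B j) with hcdef
  have hc : ∀ j, 0 < c j := by
    intro j
    have h1 := (hB j).1
    have h2 := (hB j).2
    have hlog : 0 < Real.log (1 / B j) :=
      Real.log_pos (by rw [lt_div_iff₀ h1]; linarith)
    have := hlam j
    simp only [hcdef]
    positivity
  have hr1 : ∀ j, 1 < r j := fun j => by
    simpa [r] using (hB j).1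
  -- denominator bound
  have hden : ∀ (j : ℕ) (z : ℂ), 1 - ‖z‖ ≤ ‖(r j : ℂ) * b j - z‖ := by
    intro j z
    have hrb : ‖(r j : ℂ) * b j‖ = r j := by
      rw [norm_mul, Complex.norm_real, hb j, mul_one,
        Real.norm_of_nonneg (by linarith [hr1 j])]
    calc 1 - ‖z‖ ≤ r j - ‖z‖ := by linarith [hr1 j]
      _ = ‖(r j : ℂ) * b j‖ - ‖z‖ := by rw [hrb]
      _ ≤ ‖(r j : ℂ) * b j - z‖ := norm_sub_norm_le _ _
  -- norm bound on terms
  have hnorm : ∀ (j : ℕ) (z : ℂ), ‖z‖ < 1 → ‖term j z‖ ≤ c j / (1 - ‖z‖) := by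
    intro j z hz
    have h1 : (0:ℝ) < 1 - ‖z‖ := by linarith
    have h2 := hden j z
    have heq : ‖term j z‖ = c j / ‖(r j : ℂ) * b j - z‖ := by
      have he : term j z = ((c j : ℝ) : ℂ) * b j / ((r j : ℂ) * b j - z) := rfl
      rw [he, norm_div, norm_mul, Complex.norm_real, hb j, mul_one,
        Real.norm_of_nonneg (hc j).le]
    rw [heq]
    exact div_le_div_of_nonneg_left (hc j).le h1 h2
  have hsumc : Summable c := hsum
  -- summability for each z in the ball
  have hsummable : ∀ z : ℂ, ‖z‖ < 1 → Summable (fun j => term j z) := by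
    intro z hz
    exact Summable.of_norm_bounded (hsumc.div_const _)
      (fun j => hnorm j z hz)
  -- key real-part computation
  have hkey : ∀ (j : ℕ) (z : ℂ), (term j z).re =
      c j * ((starRingEnd ℂ) (b j) * ((r j : ℂ) * b j - z)).re /
        Complex.normSq ((r j : ℂ) * b j - z) := by
    intro j z
    simp only [term, Complex.div_re, Complex.mul_re, Complex.mul_im,
      Complex.ofReal_re, Complex.ofReal_im, Complex.conj_re, Complex.conj_im,
      Complex.sub_re, Complex.sub_im]
    ring
  have hre : ∀ (j : ℕ) (z : ℂ), ‖z‖ < 1 → 0 < (term j z).re := by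
    intro j z hz
    have hwne : (r j : ℂ) * b j - z ≠ 0 := by
      intro h0
      have := hden j z
      rw [h0, norm_zero] at this
      linarith
    have hns : 0 < Complex.normSq ((r j : ℂ) * b j - z) := Complex.normSq_pos.mpr hwne
    have hconj : (starRingEnd ℂ) (b j) * ((r j : ℂ) * b j - z) =
        (r j : ℂ) - (starRingEnd ℂ) (b j) * z := by
      have hb1 : (starRingEnd ℂ) (b j) * b j = 1 := by
        rw [mul_comm, Complex.mul_conj]
        norm_cast
        rw [Complex.normSq_eq_norm_sq, hb j, one_pow]
      calc (starRingEnd ℂ) (b j) * ((r j : ℂ) * b j - z)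
          = (r j : ℂ) * ((starRingEnd ℂ) (b j) * b j) - (starRingEnd ℂ) (b j) * z := by ring
        _ = (r j : ℂ) - (starRingEnd ℂ) (b j) * z := by rw [hb1, mul_one]
    have hrepos : 0 < ((starRingEnd ℂ) (b j) * ((r j : ℂ) * b j - z)).re := by
      rw [hconj]
      have hle : ((starRingEnd ℂ) (b j) * z).re ≤ ‖z‖ := by
        calc ((starRingEnd ℂ) (b j) * z).re ≤ ‖(starRingEnd ℂ) (b j) * z‖ :=
              Complex.re_le_norm _
          _ = ‖z‖ := by rw [norm_mul, Complex.norm_conj, hb j, one_mul]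
      simp only [Complex.sub_re, Complex.ofReal_re]
      linarith [hr1 j]
    rw [hkey]
    exact div_pos (mul_pos (hc j) hrepos) hns
  -- real part of h is negative
  have hre_h : ∀ z : ℂ, ‖z‖ < 1 → (h z).re < 0 := by
    intro z hz
    have hs := hsummable z hz
    have hretsum : (∑' j, term j z).re = ∑' j, (term j z).re := Complex.re_tsum hs
    have hpos : 0 < ∑' j, (term j z).re :=
      Summable.tsum_pos ((Complex.hasSum_re hs.hasSum).summable) (fun j => (hre j z hz).le) 0 (hre 0 z hz)
    have : (h z).re = -(∑' j, term j z).re := by simp [h]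
    rw [this, hretsum]
    linarith
  have hmem : ∀ z : ℂ, z ∈ ball (0 : ℂ) 1 ↔ ‖z‖ < 1 := by
    intro z; rw [mem_ball_zero_iff]
  refine ⟨fun z hz => hsummable z ((hmem z).mp hz), ?_, fun z hz =>
    ⟨hre_h z ((hmem z).mp hz), ?_⟩⟩
  · -- differentiability
    intro z₀ hz₀
    have hz₀' : ‖z₀‖ < 1 := (hmem z₀).mp hz₀
    set ρ : ℝ := (1 + ‖z₀‖) / 2 with hρ
    have hρ1 : ρ < 1 := by rw [hρ]; linarith
    have hρ0 : ‖z₀‖ < ρ := by rw [hρ]; linarith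
    have hρpos : (0:ℝ) < 1 - ρ := by linarith
    have hdd : DifferentiableOn ℂ (fun z => ∑' j, term j z) (ball (0:ℂ) ρ) := by
      apply Complex.differentiableOn_tsum_of_summable_norm (hsumc.div_const (1 - ρ)) ?_ isOpen_ball ?_
      · intro j
        apply DifferentiableOn.div (differentiableOn_const _)
        · exact ((differentiable_const _).sub differentiable_id).differentiableOn
        · intro x hx
          have hx' : ‖x‖ < ρ := mem_ball_zero_iff.mp hx
          intro h0
          have := hden j x
          rw [h0, norm_zero] at this
          linarith
      · intro j x hx
        have hx' : ‖x‖ < ρ := mem_ball_zero_iff.mp hx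
        calc ‖term j x‖ ≤ c j / (1 - ‖x‖) := hnorm j x (hx'.trans hρ1)
          _ ≤ c j / (1 - ρ) :=
            div_le_div_of_nonneg_left (hc j).le hρpos (by linarith)
    have hda : DifferentiableAt ℂ (fun z => ∑' j, term j z) z₀ :=
      hdd.differentiableAt (isOpen_ball.mem_nhds (mem_ball_zero_iff.mpr hρ0))
    exact hda.neg.differentiableWithinAt
  · -- |exp (h z)| < 1
    rw [Complex.norm_exp, Real.exp_lt_one_iff]
    exact hre_h z ((hmem z).mp hz)
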